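/- The number of 3×3 matrices with nonnegative integer entries such that every row sum and every column sum equals t is 3*C(t+3, 4) + C(t+2, 2), where C denotes the binomial coefficient. -/

import Mathlib

open Finset

/-- extend a family of finsets by one coordinate, bounding the total. -/
def extF {β : Type} [DecidableEq β] (F : ℕ → Finset β) (n : ℕ) : Finset (ℕ × β) :=
  (Finset.range (n+1)).biUnion fun a => (F (n - a)).map ⟨fun b => (a, b), fun x y h => (Prod.mk.injEq _ _ _ _ ▸ h).2⟩

lemma mem_extF {β : Type} [DecidableEq β] (F : ℕ → Finset β) (n : ℕ) (p : ℕ × β) :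
    p ∈ extF F n ↔ p.1 ≤ n ∧ p.2 ∈ F (n - p.1) := by
  simp only [extF, mem_biUnion, mem_range, Finset.mem_map, Function.Embedding.coeFn_mk]
  constructor
  · rintro ⟨a, ha, b, hb, rfl⟩
    exact ⟨by show a ≤ n; omega, hb⟩
  · rintro ⟨h1, h2⟩
    exact ⟨p.1, by omega, p.2, h2, rfl⟩

lemma card_extF {β : Type} [DecidableEq β] (F : ℕ → Finset β) (n : ℕ) :
    (extF F n).card = ∑ a ∈ Finset.range (n+1), (F (n - a)).card := by
  rw [extF, Finset.card_biUnion]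
  · simp
  · intro x hx y hy hxy
    simp only [Finset.disjoint_left]
    rintro p hp hq
    simp only [Finset.mem_map, Function.Embedding.coeFn_mk] at hp hq
    obtain ⟨b, _, rfl⟩ := hp
    obtain ⟨c, _, hc⟩ := hq
    exact hxy ((Prod.mk.injEq _ _ _ _ ▸ hc.symm).1)

lemma card_extF_choose {β : Type} [DecidableEq β] (F : ℕ → Finset β) (k : ℕ)
    (h : ∀ m, (F m).card = (m + k).choose k) (n : ℕ) :
    (extF F n).card = (n + k + 1).choose (k + 1) := by
  rw [card_extF]
  rw [← Nat.sum_range_add_choose n k]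
  rw [← Finset.sum_range_reflect]
  apply Finset.sum_congr rfl
  intro i hi
  simp only [mem_range] at hi
  rw [h]
  congr 1
  omega

def Q1 (n : ℕ) : Finset ℕ := Finset.range (n+1)
def Q2 : ℕ → Finset (ℕ × ℕ) := extF Q1
def Q3 : ℕ → Finset (ℕ × ℕ × ℕ) := extF Q2
def Q4 : ℕ → Finset (ℕ × ℕ × ℕ × ℕ) := extF Q3

lemma card_Q1 (n : ℕ) : (Q1 n).card = (n + 1).choose 1 := by simp [Q1]
lemma card_Q2 (n : ℕ) : (Q2 n).card = (n + 2).choose 2 := card_extF_choose Q1 1 card_Q1 n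
lemma card_Q3 (n : ℕ) : (Q3 n).card = (n + 3).choose 3 := card_extF_choose Q2 2 card_Q2 n
lemma card_Q4 (n : ℕ) : (Q4 n).card = (n + 4).choose 4 := card_extF_choose Q3 3 card_Q3 n

lemma mem_Q4 (n : ℕ) (p : ℕ × ℕ × ℕ × ℕ) :
    p ∈ Q4 n ↔ p.1 + p.2.1 + p.2.2.1 + p.2.2.2 ≤ n := by
  obtain ⟨a, b, c, d⟩ := p
  simp only [Q4, Q3, Q2, mem_extF, Q1, mem_range]
  omega
abbrev T6 := ℕ × ℕ × ℕ × ℕ × ℕ × ℕ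

def gA (t : ℕ) (p : ℕ × ℕ × ℕ × ℕ) : T6 :=
  (p.1, p.2.1, p.2.2.1, 0, p.2.2.2, t - (p.1 + p.2.1 + p.2.2.1 + p.2.2.2))
def gB (t : ℕ) (p : ℕ × ℕ × ℕ × ℕ) : T6 :=
  (p.1, p.2.1, p.2.2.1, p.2.2.2 + 1, 0, t - 1 - (p.1 + p.2.1 + p.2.2.1 + p.2.2.2))
def gC (t : ℕ) (p : ℕ × ℕ × ℕ × ℕ) : T6 :=
  (p.1, p.2.1, p.2.2.1, p.2.2.2 + 1, t - 1 - (p.1 + p.2.1 + p.2.2.1 + p.2.2.2), 0)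

def FB4 (t : ℕ) : Finset (ℕ × ℕ × ℕ × ℕ) :=
  (Q4 t).filter fun p => p.1 + p.2.1 + p.2.2.1 + p.2.2.2 + 1 ≤ t
def FC4 (t : ℕ) : Finset (ℕ × ℕ × ℕ × ℕ) :=
  (Q4 t).filter fun p => p.1 + p.2.1 + p.2.2.1 + p.2.2.2 + 2 ≤ t

lemma card_FB4 (t : ℕ) : (FB4 t).card = (t + 3).choose 4 := by
  rcases Nat.eq_zero_or_pos t with h | h
  · subst h
    rw [show FB4 0 = ∅ by ext p; simp [FB4, mem_Q4]]
    simp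
  · have : FB4 t = Q4 (t - 1) := by
      ext p; simp only [FB4, mem_filter, mem_Q4]; omega
    rw [this, card_Q4]; congr 1; omega

lemma card_FC4 (t : ℕ) : (FC4 t).card = (t + 2).choose 4 := by
  rcases Nat.lt_or_ge t 2 with h | h
  · have h0 : FC4 t = ∅ := by ext p; simp only [FC4, mem_filter, mem_Q4, notMem_empty, iff_false]; omega
    rw [h0, card_empty]
    interval_cases t <;> rfl
  · have : FC4 t = Q4 (t - 2) := by
      ext p; simp only [FC4, mem_filter, mem_Q4]; omega
    rw [this, card_Q4]; congr 1; omega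

def FF (t : ℕ) : Finset T6 :=
  ((Q4 t).image (gA t)) ∪ ((FB4 t).image (gB t)) ∪ ((FC4 t).image (gC t))

lemma mem_FF (t : ℕ) (c : T6) :
    c ∈ FF t ↔ c.1 + c.2.1 + c.2.2.1 + c.2.2.2.1 + c.2.2.2.2.1 + c.2.2.2.2.2 = t ∧
      (c.2.2.2.1 = 0 ∨ c.2.2.2.2.1 = 0 ∨ c.2.2.2.2.2 = 0) := by
  obtain ⟨c1, c2, c3, c4, c5, c6⟩ := c
  simp only [FF, mem_union, mem_image, mem_Q4, FB4, FC4, mem_filter, gA, gB, gC, Prod.mk.injEq]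
  constructor
  · rintro ((⟨⟨a,b,cc,d⟩, hp, h1,h2,h3,h4,h5,h6⟩ | ⟨⟨a,b,cc,d⟩, hp, h1,h2,h3,h4,h5,h6⟩) |
      ⟨⟨a,b,cc,d⟩, hp, h1,h2,h3,h4,h5,h6⟩) <;> simp only [mem_Q4] at hp <;>
      simp_all <;> omega
  · rintro ⟨hsum, h4 | h5 | h6⟩
    · exact Or.inl (Or.inl ⟨(c1,c2,c3,c5), by simp [mem_Q4]; omega⟩)
    · by_cases hc4 : c4 = 0
      · exact Or.inl (Or.inl ⟨(c1,c2,c3,c5), by simp [mem_Q4]; omega⟩)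
      · refine Or.inl (Or.inr ⟨(c1,c2,c3,c4-1), ?_⟩)
        simp [mem_Q4]; omega
    · by_cases hc4 : c4 = 0
      · exact Or.inl (Or.inl ⟨(c1,c2,c3,c5), by simp [mem_Q4]; omega⟩)
      · by_cases hc5 : c5 = 0
        · refine Or.inl (Or.inr ⟨(c1,c2,c3,c4-1), ?_⟩)
          simp [mem_Q4]; omega
        · refine Or.inr ⟨(c1,c2,c3,c4-1), ?_⟩
          simp [mem_Q4]; omega

lemma card_FF (t : ℕ) : (FF t).card = (t+4).choose 4 + (t+3).choose 4 + (t+2).choose 4 := by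
  have hinjA : Set.InjOn (gA t) (Q4 t) := by
    rintro ⟨a,b,c,d⟩ _ ⟨a',b',c',d'⟩ _ h
    simp only [gA, Prod.mk.injEq] at h
    simp_all
  have hinjB : Set.InjOn (gB t) (FB4 t) := by
    rintro ⟨a,b,c,d⟩ _ ⟨a',b',c',d'⟩ _ h
    simp only [gB, Prod.mk.injEq] at h
    simp_all
  have hinjC : Set.InjOn (gC t) (FC4 t) := by
    rintro ⟨a,b,c,d⟩ _ ⟨a',b',c',d'⟩ _ h
    simp only [gC, Prod.mk.injEq] at h
    simp_all
  have d1 : Disjoint ((Q4 t).image (gA t)) ((FB4 t).image (gB t)) := by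
    simp only [Finset.disjoint_left, mem_image]
    rintro p ⟨q, _, rfl⟩ ⟨r, _, hr⟩
    simp only [gA, gB, Prod.mk.injEq] at hr
    omega
  have d2 : Disjoint (((Q4 t).image (gA t)) ∪ ((FB4 t).image (gB t))) ((FC4 t).image (gC t)) := by
    simp only [Finset.disjoint_left, mem_union, mem_image]
    rintro p (⟨q, _, rfl⟩ | ⟨q, hq, rfl⟩) ⟨r, hr', hr⟩
    · simp only [gA, gC, Prod.mk.injEq] at hr
      omega
    · simp only [FC4, mem_filter, mem_Q4] at hr'
      simp only [FB4, mem_filter, mem_Q4] at hq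
      simp only [gB, gC, Prod.mk.injEq] at hr
      omega
  rw [FF, Finset.card_union_of_disjoint d2, Finset.card_union_of_disjoint d1,
    Finset.card_image_of_injOn hinjA, Finset.card_image_of_injOn hinjB,
    Finset.card_image_of_injOn hinjC, card_Q4, card_FB4, card_FC4]
def fmat (c : T6) : Matrix (Fin 3) (Fin 3) ℕ :=
  !![c.1 + c.2.2.2.2.2, c.2.1 + c.2.2.2.1,     c.2.2.1 + c.2.2.2.2.1;
     c.2.2.1 + c.2.2.2.1, c.1 + c.2.2.2.2.1,   c.2.1 + c.2.2.2.2.2;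
     c.2.1 + c.2.2.2.2.1, c.2.2.1 + c.2.2.2.2.2, c.1 + c.2.2.2.1]

lemma set_eq (t : ℕ) :
    {M : Matrix (Fin 3) (Fin 3) ℕ |
      (∀ i, ∑ j, M i j = t) ∧ (∀ j, ∑ i, M i j = t)} = fmat '' ↑(FF t) := by
  ext M
  simp only [Set.mem_setOf_eq, Set.mem_image, Finset.mem_coe]
  constructor
  · rintro ⟨hrow, hcol⟩
    have r0 := hrow 0; have r1 := hrow 1; have r2 := hrow 2
    have k0 := hcol 0; have k1 := hcol 1; have k2 := hcol 2
    simp only [Fin.sum_univ_three] at r0 r1 r2 k0 k1 k2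
    obtain ⟨m, hm⟩ : ∃ m, m = min (M 0 0) (min (M 1 1) (M 2 2)) := ⟨_, rfl⟩
    refine ⟨(m, M 0 1 - (M 2 2 - m), M 1 0 - (M 2 2 - m),
             M 2 2 - m, M 1 1 - m, M 0 0 - m), ?_, ?_⟩
    · rw [mem_FF]
      simp only
      omega
    · ext x y
      fin_cases x <;> fin_cases y <;> simp [fmat] <;> omega
  · rintro ⟨c, hc, rfl⟩
    rw [mem_FF] at hc
    obtain ⟨c1, c2, c3, c4, c5, c6⟩ := c
    simp only at hc
    constructor <;> intro j <;> fin_cases j <;>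
      simp [fmat, Fin.sum_univ_three] <;> omega

lemma inj_fmat (t : ℕ) : Set.InjOn fmat ↑(FF t) := by
  rintro ⟨a1,a2,a3,a4,a5,a6⟩ ha ⟨b1,b2,b3,b4,b5,b6⟩ hb h
  simp only [Finset.mem_coe, mem_FF] at ha hb
  have e00 := congrFun (congrFun h 0) 0
  have e01 := congrFun (congrFun h 0) 1
  have e02 := congrFun (congrFun h 0) 2
  have e10 := congrFun (congrFun h 1) 0
  have e11 := congrFun (congrFun h 1) 1
  have e22 := congrFun (congrFun h 2) 2
  simp [fmat] at e00 e01 e02 e10 e11 e22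
  simp only [Prod.mk.injEq]
  omega

theorem macmahon_semimagic_3x3 (t : ℕ) :
    Set.ncard {M : Matrix (Fin 3) (Fin 3) ℕ |
      (∀ i, ∑ j, M i j = t) ∧ (∀ j, ∑ i, M i j = t)} =
    3 * Nat.choose (t + 3) 4 + Nat.choose (t + 2) 2 := by
  rw [set_eq t, Set.ncard_image_of_injOn (inj_fmat t), Set.ncard_coe_finset, card_FF]
  have h1 : (t+4).choose 4 = (t+3).choose 3 + (t+3).choose 4 := Nat.choose_succ_succ (t+3) 3
  have h2 : (t+3).choose 3 = (t+2).choose 2 + (t+2).choose 3 := Nat.choose_succ_succ (t+2) 2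
  have h3 : (t+3).choose 4 = (t+2).choose 3 + (t+2).choose 4 := Nat.choose_succ_succ (t+2) 3
  omega
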